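/- arXiv:1304.5053 — 6 statements merged into one kernel-verified Lean document; each statement's English description precedes it below -/
import Mathlib

section
/- Let G be a solvable group and let φ : G → G be a locally inner endomorphism, i.e., a group homomorphism such that φ(x) is conjugate to x for every x ∈ G. Then φ is bijective, i.e., φ is an automorphism of G. (In other words, solvable groups are B-rigid.) -/
open scoped commutatorElement

/-- Solvable groups are B-rigid: every locally inner endomorphism of a solvable group
is bijective, i.e. an automorphism. -/
theorem solvable_group_B_rigid {G : Type*} [Group G] [Group.IsSolvable G] (φ : G →* G)
    (h : ∀ x : G, IsConj (φ x) x) : Function.Bijective φ := by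
  constructor
  · rw [injective_iff_map_eq_one]
    intro a ha
    have := h a
    rw [ha] at this
    obtain ⟨c, hc⟩ := isConj_iff.mp this
    simpa using hc.symm
  · -- surjectivity
    have key : ∀ n : ℕ, ∀ x : G, ∃ a : G, ∃ u ∈ derivedSeries G n, x = φ a * u := by
      intro n
      induction n with
      | zero =>
        intro x
        exact ⟨1, x, by simp [derivedSeries_zero], by simp⟩
      | succ n ih =>
        have step : ∀ u ∈ derivedSeries G n,
            ∃ b : G, ∃ w ∈ derivedSeries G (n + 1), u = φ b * w := by
          intro u hu
          obtain ⟨g, hg⟩ := isConj_iff.mp (h u)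
          -- hg : g * φ u * g⁻¹ = u  (SemiconjBy: g * φ u = u * g)
          obtain ⟨a, v, hv, hgav⟩ := ih g
          have hφu : φ u ∈ derivedSeries G n := by
            have := map_derivedSeries_le_derivedSeries φ n
            exact this ⟨u, hu, rfl⟩
          -- u = g * φ u * g⁻¹ = φ a * (v * φ u * v⁻¹) * (φ a)⁻¹
          have hu_eq : u = φ a * (v * φ u * v⁻¹) * (φ a)⁻¹ := by
            conv_lhs => rw [← hg, hgav]
            group
          set c : G := ⁅φ u, v⁆ with hc
          have hc_mem : c ∈ derivedSeries G (n + 1) := by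
            rw [derivedSeries_succ]
            exact Subgroup.commutator_mem_commutator hφu hv
          have hm : v * φ u * v⁻¹ = φ u * ⁅(φ u)⁻¹, v⁆ := by group
          have hc2 : ⁅(φ u)⁻¹, v⁆ ∈ derivedSeries G (n + 1) := by
            rw [derivedSeries_succ]
            exact Subgroup.commutator_mem_commutator (inv_mem hφu) hv
          refine ⟨a * u * a⁻¹, φ a * ⁅(φ u)⁻¹, v⁆ * (φ a)⁻¹, ?_, ?_⟩
          · exact (derivedSeries_normal G (n + 1)).conj_mem _ hc2 _
          · conv_lhs => rw [hu_eq, hm]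
            simp only [map_mul, map_inv, commutatorElement_def]
            group
        intro x
        obtain ⟨a, u, hu, hx⟩ := ih x
        obtain ⟨b, w, hw, huw⟩ := step u hu
        exact ⟨a * b, w, hw, by rw [hx, huw, map_mul, mul_assoc]⟩
    intro x
    obtain ⟨n, hn⟩ := Group.IsSolvable.solvable (G := G)
    obtain ⟨a, u, hu, hx⟩ := key n x
    rw [hn, Subgroup.mem_bot] at hu
    exact ⟨a, by rw [hx, hu, mul_one]⟩
end

section
/- Let n be a natural number and let G = Sym(n) be the symmetric group on n letters. Then every locally inner automorphism of G is inner: if φ is an automorphism of G such that φ(σ) is conjugate to σ for every σ ∈ G, then there exists τ ∈ G with φ(σ) = τστ⁻¹ for all σ ∈ G. (Symmetric groups are A-rigid.) -/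
open Equiv Equiv.Perm

private lemma swap_eq_of_isSwap {α : Type*} [DecidableEq α] {f : Equiv.Perm α}
    (hf : f.IsSwap) {a : α} (ha : f a ≠ a) : f = Equiv.swap a (f a) := by
  obtain ⟨u, v, huv, rfl⟩ := hf
  rcases eq_or_ne a u with rfl | hu
  · rw [swap_apply_left]
  rcases eq_or_ne a v with rfl | hv
  · rw [swap_apply_right]; exact Equiv.swap_comm _ _
  · exact absurd (swap_apply_of_ne_of_ne hu hv) ha

private lemma noncomm_shares {α : Type*} {f g : Equiv.Perm α}
    (hfg : ¬ Commute f g) : ∃ x, f x ≠ x ∧ g x ≠ x := by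
  by_contra hx
  push_neg at hx
  exact hfg (Equiv.Perm.Disjoint.commute (fun x => by
    rcases eq_or_ne (f x) x with h1 | h1
    · exact Or.inl h1
    · exact Or.inr (hx x h1)))

private lemma swap_sandwich1 {α : Type*} [DecidableEq α] {a b c : α}
    (hca : c ≠ a) (hbc : b ≠ c) :
    Equiv.swap a b * Equiv.swap b c * Equiv.swap a b = Equiv.swap a c := by
  have h := Equiv.swap_apply_apply (Equiv.swap a b) b c
  rw [Equiv.swap_inv, Equiv.swap_apply_right,
    Equiv.swap_apply_of_ne_of_ne hca (Ne.symm hbc)] at h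
  exact h.symm

private lemma swap_sandwich2 {α : Type*} [DecidableEq α] {a b c : α}
    (hca : c ≠ a) (hcb : c ≠ b) :
    Equiv.swap a b * Equiv.swap a c * Equiv.swap a b = Equiv.swap b c := by
  have h := Equiv.swap_apply_apply (Equiv.swap a b) a c
  rw [Equiv.swap_inv, Equiv.swap_apply_left,
    Equiv.swap_apply_of_ne_of_ne hca hcb] at h
  exact h.symm

/-- Symmetric groups are A-rigid: every locally inner (class-preserving) automorphism
of `Sym(n)` is inner. -/
theorem symmetric_group_A_rigid (n : ℕ)
    (φ : Equiv.Perm (Fin n) ≃* Equiv.Perm (Fin n))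
    (h : ∀ σ : Equiv.Perm (Fin n), IsConj (φ σ) σ) :
    ∃ τ : Equiv.Perm (Fin n), ∀ σ : Equiv.Perm (Fin n), φ σ = τ * σ * τ⁻¹ := by
  rcases lt_or_ge n 3 with hn | hn
  · -- small cases: the group is commutative, so φ = id
    have comm : ∀ a b : Equiv.Perm (Fin n), a * b = b * a := by
      interval_cases n <;> decide
    refine ⟨1, fun σ => ?_⟩
    obtain ⟨c, hc⟩ := isConj_iff.mp (h σ)
    rw [comm c (φ σ), mul_assoc, mul_inv_cancel, mul_one] at hc
    simp [hc]
  -- main case: n ≥ 3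
  set i0 : Fin n := ⟨0, by omega⟩ with hi0
  set i1 : Fin n := ⟨1, by omega⟩ with hi1
  set i2 : Fin n := ⟨2, by omega⟩ with hi2
  have h01 : i1 ≠ i0 := by simp [hi0, hi1, Fin.ext_iff]
  have h02 : i2 ≠ i0 := by simp [hi0, hi2, Fin.ext_iff]
  have h12 : i1 ≠ i2 := by simp [hi1, hi2, Fin.ext_iff]
  set T : Fin n → Equiv.Perm (Fin n) := fun k => Equiv.swap i0 k with hT
  have hTdef : ∀ k, T k = Equiv.swap i0 k := fun _ => rfl
  have hT0 : ∀ k, T k i0 = k := fun k => Equiv.swap_apply_left _ _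
  have hTinj : ∀ {j k : Fin n}, T j = T k → j = k := by
    intro j k hjk
    rw [← hT0 j, ← hT0 k, hjk]
  -- each φ (T k) is a swap
  have hswap : ∀ k, k ≠ i0 → (φ (T k)).IsSwap := by
    intro k hk
    obtain ⟨c, hc⟩ := isConj_iff.mp (h (T k))
    refine ⟨c⁻¹ i0, c⁻¹ k, fun he => hk ((Equiv.injective c⁻¹) he).symm, ?_⟩
    have h1 := Equiv.swap_apply_apply c⁻¹ i0 k
    rw [inv_inv] at h1
    have h2 : φ (T k) = c⁻¹ * T k * c := by
      conv_rhs => rw [← hc]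
      group
    rw [h2, h1, hTdef k]
  -- images of distinct T's do not commute
  have hnc : ∀ j k : Fin n, j ≠ i0 → k ≠ i0 → j ≠ k →
      ¬ Commute (φ (T j)) (φ (T k)) := by
    intro j k hj hk hjk hC
    have hC' : T j * T k = T k * T j :=
      φ.injective (by rw [map_mul, map_mul]; exact hC)
    have := congrArg (fun σ : Equiv.Perm (Fin n) => σ i0) hC'
    simp only [Equiv.Perm.mul_apply, hTdef, Equiv.swap_apply_left] at this
    rw [Equiv.swap_apply_of_ne_of_ne hk (Ne.symm hjk),
      Equiv.swap_apply_of_ne_of_ne hj hjk] at this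
    exact hjk this.symm
  -- common point a
  obtain ⟨a, ha1, ha2⟩ := noncomm_shares (hnc i1 i2 h01 h02 h12)
  have hs1 : φ (T i1) = Equiv.swap a (φ (T i1) a) := swap_eq_of_isSwap (hswap i1 h01) ha1
  have hs2 : φ (T i2) = Equiv.swap a (φ (T i2) a) := swap_eq_of_isSwap (hswap i2 h02) ha2
  have hbc : φ (T i1) a ≠ φ (T i2) a := by
    intro he
    have heq : φ (T i1) = φ (T i2) := by rw [hs1, hs2, he]
    exact h12 (hTinj (φ.injective heq))
  -- every φ (T k) moves a
  have claim : ∀ k, k ≠ i0 → φ (T k) a ≠ a := by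
    intro k hk hka
    have hk1 : k ≠ i1 := fun he => ha1 (by rw [← he]; exact hka)
    have hk2 : k ≠ i2 := fun he => ha2 (by rw [← he]; exact hka)
    have hgb : φ (T k) (φ (T i1) a) ≠ φ (T i1) a := by
      obtain ⟨x, hx1, hx2⟩ := noncomm_shares (hnc k i1 hk h01 hk1)
      have hxa : x ≠ a := fun he => hx1 (by rw [he]; exact hka)
      rcases eq_or_ne x (φ (T i1) a) with rfl | hxb
      · exact hx1
      · rw [hs1] at hx2
        exact absurd (Equiv.swap_apply_of_ne_of_ne hxa hxb) hx2
    have hgc : φ (T k) (φ (T i2) a) ≠ φ (T i2) a := by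
      obtain ⟨x, hx1, hx2⟩ := noncomm_shares (hnc k i2 hk h02 hk2)
      have hxa : x ≠ a := fun he => hx1 (by rw [he]; exact hka)
      rcases eq_or_ne x (φ (T i2) a) with rfl | hxb
      · exact hx1
      · rw [hs2] at hx2
        exact absurd (Equiv.swap_apply_of_ne_of_ne hxa hxb) hx2
    have h1 : φ (T k) = Equiv.swap (φ (T i1) a) (φ (T k) (φ (T i1) a)) :=
      swap_eq_of_isSwap (hswap k hk) hgb
    have h2 : φ (T k) (φ (T i1) a) = φ (T i2) a := by
      rcases eq_or_ne (φ (T k) (φ (T i1) a)) (φ (T i2) a) with he | he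
      · exact he
      · exfalso
        apply hgc
        rw [h1]
        exact Equiv.swap_apply_of_ne_of_ne (Ne.symm hbc) (Ne.symm he)
    have hgbc : φ (T k) = Equiv.swap (φ (T i1) a) (φ (T i2) a) := by rw [h1, h2]
    have key : φ (T i1 * T k * T i1) = φ (T i2) := by
      rw [map_mul, map_mul, hs1, hs2, hgbc]
      exact swap_sandwich1 ha2 hbc
    have heq : T i1 * T k * T i1 = T i2 := φ.injective key
    have hval := congrArg (fun σ : Equiv.Perm (Fin n) => σ i0) heq
    simp only [Equiv.Perm.mul_apply, hTdef, Equiv.swap_apply_left] at hval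
    rw [Equiv.swap_apply_of_ne_of_ne h01 (Ne.symm hk1), Equiv.swap_apply_right] at hval
    exact h02 hval.symm
  -- all images are swaps through a
  have hform : ∀ k, k ≠ i0 → φ (T k) = Equiv.swap a (φ (T k) a) :=
    fun k hk => swap_eq_of_isSwap (hswap k hk) (claim k hk)
  -- the conjugating permutation
  set f : Fin n → Fin n := fun k => if k = i0 then a else φ (T k) a with hf
  have hfi0 : f i0 = a := by simp [hf]
  have hfk : ∀ k, k ≠ i0 → f k = φ (T k) a := by intro k hk; simp [hf, hk]
  have hfne : ∀ {j k : Fin n}, j ≠ i0 → k ≠ i0 → f j = f k → j = k := by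
    intro j k hj hk he
    rw [hfk j hj, hfk k hk] at he
    have : φ (T j) = φ (T k) := by rw [hform j hj, hform k hk, he]
    exact hTinj (φ.injective this)
  have hfinj : Function.Injective f := by
    intro j k he
    rcases eq_or_ne j i0 with rfl | hj
    · rcases eq_or_ne k i0 with rfl | hk
      · rfl
      · rw [hfi0, hfk k hk] at he
        exact absurd he.symm (claim k hk)
    · rcases eq_or_ne k i0 with rfl | hk
      · rw [hfi0, hfk j hj] at he
        exact absurd he (claim j hj)
      · exact hfne hj hk he
  set τ : Equiv.Perm (Fin n) :=
    Equiv.ofBijective f (Finite.injective_iff_bijective.mp hfinj) with hτ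
  have hτa : ∀ k, τ k = f k := fun k => rfl
  refine ⟨τ, ?_⟩
  -- agree on swaps, which generate
  have key : ∀ x y : Fin n, x ≠ y → φ (Equiv.swap x y) = τ * Equiv.swap x y * τ⁻¹ := by
    have base : ∀ y, y ≠ i0 → φ (Equiv.swap i0 y) = τ * Equiv.swap i0 y * τ⁻¹ := by
      intro y hy
      rw [show τ * Equiv.swap i0 y * τ⁻¹ = Equiv.swap (τ i0) (τ y) from
        (Equiv.swap_apply_apply τ i0 y).symm, hτa, hτa, hfi0, hfk y hy, ← hTdef y]
      exact hform y hy
    intro x y hxy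
    rcases eq_or_ne x i0 with rfl | hx
    · exact base y (Ne.symm hxy)
    rcases eq_or_ne y i0 with rfl | hy
    · rw [Equiv.swap_comm x i0]
      exact base x hx
    -- x, y ≠ i0 : swap x y = T x * T y * T x
    have hya : φ (T y) a ≠ a := claim y hy
    have hyx : φ (T y) a ≠ φ (T x) a := fun he =>
      hxy ((hfne hy hx (by rw [hfk y hy, hfk x hx, he])).symm)
    have hdec : Equiv.swap x y = T x * T y * (T x)⁻¹ := by
      have h2 : T x y = y := Equiv.swap_apply_of_ne_of_ne hy (Ne.symm hxy)
      have h3 := Equiv.swap_apply_apply (T x) i0 y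
      rw [hT0 x, h2] at h3
      rw [h3, ← hTdef y]
    rw [show τ * Equiv.swap x y * τ⁻¹ = Equiv.swap (τ x) (τ y) from
      (Equiv.swap_apply_apply τ x y).symm, hτa, hτa, hfk x hx, hfk y hy]
    conv_lhs => rw [hdec, map_mul, map_mul, map_inv, hform x hx, hform y hy,
      Equiv.swap_inv]
    exact swap_sandwich2 hya hyx
  -- conclude via generation by swaps
  intro σ
  have hgen : σ ∈ Subgroup.closure { σ : Equiv.Perm (Fin n) | σ.IsSwap } := by
    rw [Equiv.Perm.closure_isSwap]; trivial
  have hEq : Set.EqOn (φ.toMonoidHom) ((MulAut.conj τ).toMonoidHom)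
      ((Subgroup.closure { σ : Equiv.Perm (Fin n) | σ.IsSwap } : Subgroup _) : Set _) := by
    apply MonoidHom.eqOn_closure
    rintro σ ⟨x, y, hxy, rfl⟩
    simpa [MulAut.conj_apply] using key x y hxy
  simpa [MulAut.conj_apply] using hEq hgen
end

section
/- Let p be a prime and let G be a finite group of order p^k with k ≤ 4. Then every locally inner automorphism of G is inner: if φ is an automorphism of G such that φ(x) is conjugate to x for every x ∈ G, then there exists a ∈ G with φ(x) = a x a⁻¹ for all x ∈ G. (p-groups of order at most p⁴ are A-rigid.) -/
open Subgroup

/-- Key lemma: a finite `p`-group with an abelian normal subgroup of index `p` has all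
class-preserving automorphisms inner. -/
private lemma abelian_index_p_rigid {G : Type*} [Group G] [Finite G] {p : ℕ} (hp : p.Prime)
    (hpg : IsPGroup p G) (A : Subgroup G) [A.Normal]
    (hcomm : ∀ a ∈ A, ∀ b ∈ A, a * b = b * a) (hAi : A.index = p)
    (φ : G ≃* G) (h : ∀ x : G, IsConj (φ x) x) :
    ∃ a : G, ∀ x : G, φ x = a * x * a⁻¹ := by
  classical
  have hAne : A ≠ ⊤ := fun hA => hp.one_lt.ne' (by rw [← hAi, hA, Subgroup.index_top])
  obtain ⟨g, hg⟩ : ∃ g : G, g ∉ A := by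
    by_contra hcon
    push_neg at hcon
    exact hAne (Subgroup.eq_top_iff' A |>.mpr hcon)
  obtain ⟨c, hc⟩ := isConj_iff.mp (h g)
  -- ψ = conj(c) ∘ φ fixes g
  set ψ : G →* G := (MulAut.conj c).toMonoidHom.comp φ.toMonoidHom with hψdef
  have hψ : ∀ x, ψ x = c * φ x * c⁻¹ := fun x => rfl
  have hψg : ψ g = g := by rw [hψ, hc]
  have hψconj : ∀ x, IsConj (ψ x) x := by
    intro x
    refine IsConj.trans ?_ (h x)
    rw [hψ]
    exact (isConj_iff.mpr ⟨c, rfl⟩).symm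
  -- equalizer subgroups
  set S : ℕ → Subgroup G := fun j => MonoidHom.eqLocus ψ (MulAut.conj (g ^ j)).toMonoidHom
    with hSdef
  have hmemS : ∀ j x, x ∈ S j ↔ ψ x = g ^ j * x * (g ^ j)⁻¹ := fun j x => Iff.rfl
  -- the quotient G/A has order p and is generated by the image of g
  have hcardQ : Nat.card (G ⧸ A) = p := by rw [← Subgroup.index_eq_card, hAi]
  have hgp : ((g : G ⧸ A)) ^ p = 1 := by rw [← hcardQ]; exact pow_card_eq_one'
  have hgbar : (g : G ⧸ A) ≠ 1 := by
    rw [Ne, QuotientGroup.eq_one_iff]; exact hg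
  have horder : orderOf (g : G ⧸ A) = p := by
    have h1 : orderOf (g : G ⧸ A) ∣ p := orderOf_dvd_of_pow_eq_one hgp
    rcases (Nat.dvd_prime hp).mp h1 with h2 | h2
    · exact absurd (orderOf_eq_one_iff.mp h2) hgbar
    · exact h2
  have hzp : Subgroup.zpowers (g : G ⧸ A) = ⊤ := by
    apply Subgroup.eq_top_of_card_eq
    rw [Nat.card_zpowers, horder, hcardQ]
  -- covering claim
  have hcover : ∀ a ∈ A, ∃ j < p, a ∈ S j := by
    intro a ha
    obtain ⟨x, hx⟩ := isConj_iff.mp (hψconj a).symm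
    obtain ⟨m, hmx⟩ := Subgroup.mem_zpowers_iff.mp (hzp ▸ Subgroup.mem_top (x : G ⧸ A))
    have hp0 : (0 : ℤ) < (p : ℤ) := Int.natCast_pos.mpr hp.pos
    refine ⟨(m % (p : ℤ)).toNat, ?_, ?_⟩
    · have := Int.emod_lt_of_pos m hp0
      omega
    · set j : ℕ := (m % (p : ℤ)).toNat with hjdef
      have hjm : ((g : G ⧸ A)) ^ (j : ℤ) = (g : G ⧸ A) ^ m := by
        have hnn : (0 : ℤ) ≤ m % (p : ℤ) := Int.emod_nonneg m (by positivity)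
        have hj : (j : ℤ) = m % (p : ℤ) := Int.toNat_of_nonneg hnn
        rw [hj]
        conv_rhs => rw [← Int.emod_add_mul_ediv m (p : ℤ)]
        rw [zpow_add, zpow_mul]
        norm_num [zpow_natCast, hgp]
      have hb : (g ^ j)⁻¹ * x ∈ A := by
        rw [← QuotientGroup.eq_one_iff]
        have : ((x : G ⧸ A)) = ((g : G ⧸ A)) ^ j := by
          rw [← hmx, ← hjm, zpow_natCast]
        simp only [QuotientGroup.mk_mul, QuotientGroup.mk_inv, QuotientGroup.mk_pow]
        rw [this]
        group
      set b : G := (g ^ j)⁻¹ * x with hbdef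
      have hxb : x = g ^ j * b := by rw [hbdef]; group
      have hbab : b * a * b⁻¹ = a := by
        have := hcomm b hb a ha
        rw [this]; group
      rw [hmemS]
      have : ψ a = g ^ j * (b * a * b⁻¹) * (g ^ j)⁻¹ := by
        rw [← hx, hxb]; group
      rw [this, hbab]
  -- counting: some S j contains A
  haveI := Fact.mk hp
  obtain ⟨j, hjA⟩ : ∃ j, A ≤ S j := by
    by_contra hcon
    push_neg at hcon
    haveI : Fintype G := Fintype.ofFinite G
    obtain ⟨m, hm⟩ := IsPGroup.iff_card.mp (hpg.to_subgroup A)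
    set T : ℕ → Subgroup ↥A := fun j => (S j).subgroupOf A with hTdef
    have hTcover : ∀ a : ↥A, ∃ j < p, a ∈ T j := by
      intro a
      obtain ⟨j, hj, hmem⟩ := hcover (a : G) a.2
      exact ⟨j, hj, Subgroup.mem_subgroupOf.mpr hmem⟩
    have hTbound : ∀ j, Nat.card (T j) ≤ p ^ (m - 1) ∧ 1 ≤ m := by
      intro j
      have hdvd : Nat.card (T j) ∣ p ^ m := hm ▸ Subgroup.card_subgroup_dvd_card (T j)
      have hne : Nat.card (T j) ≠ p ^ m := by
        intro hceq
        have : T j = ⊤ := Subgroup.eq_top_of_card_eq _ (by rw [hceq, ← hm])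
        exact hcon j (Subgroup.subgroupOf_eq_top.mp this)
      obtain ⟨i, him, hi⟩ := (Nat.dvd_prime_pow hp).mp hdvd
      have hilt : i < m := lt_of_le_of_ne him (fun hh => hne (by rw [hi, hh]))
      constructor
      · rw [hi]
        exact Nat.pow_le_pow_right hp.pos (by omega)
      · omega
    have hm1 : 1 ≤ m := (hTbound 0).2
    classical
    set U : ℕ → Finset ↥A := fun j => ((T j : Set ↥A).toFinset).erase 1 with hUdef
    have hsub : Finset.univ.erase (1 : ↥A) ⊆ (Finset.range p).biUnion U := by
      intro a ha
      obtain ⟨j, hj, hmem⟩ := hTcover a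
      refine Finset.mem_biUnion.mpr ⟨j, Finset.mem_range.mpr hj, ?_⟩
      exact Finset.mem_erase.mpr ⟨(Finset.mem_erase.mp ha).1, Set.mem_toFinset.mpr hmem⟩
    have hcardA : Fintype.card ↥A = p ^ m := by rw [← Nat.card_eq_fintype_card, hm]
    have hc1 : (Finset.univ.erase (1 : ↥A)).card = p ^ m - 1 := by
      rw [Finset.card_erase_of_mem (Finset.mem_univ _), Finset.card_univ, hcardA]
    have hUcard : ∀ j, (U j).card ≤ p ^ (m - 1) - 1 := by
      intro j
      have h1mem : (1 : ↥A) ∈ (T j : Set ↥A).toFinset := Set.mem_toFinset.mpr (T j).one_mem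
      rw [hUdef]
      simp only
      rw [Finset.card_erase_of_mem h1mem, Set.toFinset_card]
      have : Fintype.card ↥(T j : Set ↥A) = Nat.card (T j) := by
        rw [Nat.card_eq_fintype_card]; rfl
      rw [this]
      exact Nat.sub_le_sub_right (hTbound j).1 1
    have hc2 : ((Finset.range p).biUnion U).card ≤ p * (p ^ (m - 1) - 1) := by
      refine le_trans (Finset.card_biUnion_le) ?_
      calc (Finset.range p).sum (fun j => (U j).card)
          ≤ (Finset.range p).sum (fun _ => p ^ (m - 1) - 1) :=
            Finset.sum_le_sum (fun j _ => hUcard j)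
        _ = p * (p ^ (m - 1) - 1) := by rw [Finset.sum_const, Finset.card_range, smul_eq_mul]
    have hle := le_trans (le_of_eq hc1.symm) (le_trans (Finset.card_le_card hsub) hc2)
    have hkey : p * p ^ (m - 1) = p ^ m := by
      rw [← pow_succ']
      congr 1
      omega
    have hX1 : 1 ≤ p ^ (m - 1) := Nat.one_le_pow _ _ hp.pos
    have hmul : p * (p ^ (m - 1) - 1) = p ^ m - p := by
      rw [Nat.mul_sub, mul_one, hkey]
    rw [hmul] at hle
    have hpm : p ≤ p ^ m := Nat.le_self_pow (by omega) p
    have := hp.two_le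
    omega
  have hgS : g ∈ S j := by
    rw [hmemS, hψg]
    group
  have hStop : S j = ⊤ := by
    have h1 : (S j).index ∣ p := hAi ▸ Subgroup.index_dvd_of_le hjA
    rcases (Nat.dvd_prime hp).mp h1 with h2 | h2
    · exact Subgroup.index_eq_one.mp h2
    · exfalso
      have hcard : Nat.card (S j) = Nat.card A := by
        have := Subgroup.card_mul_index (S j)
        have := Subgroup.card_mul_index A
        have hpos : 0 < p := hp.pos
        nlinarith [Subgroup.card_mul_index (S j), Subgroup.card_mul_index A, h2, hAi,
          Nat.card_pos (α := A), Nat.card_pos (α := (S j))]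
      have heq : A = S j := Subgroup.eq_of_le_of_card_ge hjA (le_of_eq hcard)
      exact hg (heq ▸ hgS)
  refine ⟨c⁻¹ * g ^ j, fun x => ?_⟩
  have hx : ψ x = g ^ j * x * (g ^ j)⁻¹ := (hmemS j x).mp (hStop ▸ Subgroup.mem_top x)
  rw [hψ] at hx
  have : φ x = c⁻¹ * (g ^ j * x * (g ^ j)⁻¹) * c := by
    rw [← hx]; group
  rw [this]; group

/-- Finite `p`-groups of order at most `p^4` are A-rigid: every locally inner automorphism
is inner. -/
theorem p_group_order_le_p4_A_rigid {G : Type*} [Group G] [Finite G]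
    (p k : ℕ) (hp : p.Prime) (hk : k ≤ 4) (hcard : Nat.card G = p ^ k)
    (φ : G ≃* G) (h : ∀ x : G, IsConj (φ x) x) :
    ∃ a : G, ∀ x : G, φ x = a * x * a⁻¹ := by
  classical
  by_cases hZ : Subgroup.center G = ⊤
  · -- abelian case
    refine ⟨1, fun x => ?_⟩
    obtain ⟨cc, hcc⟩ := isConj_iff.mp (h x)
    have hme : φ x ∈ Subgroup.center G := hZ ▸ Subgroup.mem_top _
    rw [Subgroup.mem_center_iff] at hme
    have hfix : φ x = x := by
      rw [hme cc] at hcc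
      rwa [mul_inv_cancel_right] at hcc
    rw [one_mul, inv_one, mul_one]; exact hfix
  · have hpg : IsPGroup p G := IsPGroup.of_card hcard
    haveI := Fact.mk hp
    haveI hGnt : Nontrivial G := by
      by_contra hcon
      rw [not_nontrivial_iff_subsingleton] at hcon
      exact hZ (Subsingleton.elim _ _)
    set Z := Subgroup.center G with hZdef
    haveI : Nontrivial Z := hpg.center_nontrivial
    obtain ⟨w, hw⟩ : ∃ w : G, w ∉ Z := by
      by_contra hcon
      push_neg at hcon
      exact hZ ((Subgroup.eq_top_iff' Z).mpr hcon)
    haveI : Nontrivial (G ⧸ Z) :=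
      ⟨⟨(w : G ⧸ Z), 1, by rw [Ne, QuotientGroup.eq_one_iff]; exact hw⟩⟩
    have hQpg : IsPGroup p (G ⧸ Z) := hpg.to_quotient Z
    haveI : Nontrivial (Subgroup.center (G ⧸ Z)) := hQpg.center_nontrivial
    obtain ⟨tq, htqne⟩ := exists_ne (1 : Subgroup.center (G ⧸ Z))
    obtain ⟨t, ht⟩ := QuotientGroup.mk_surjective (tq : G ⧸ Z)
    have htZ : t ∉ Z := by
      intro hh
      apply htqne
      have : ((tq : G ⧸ Z)) = 1 := by rw [← ht]; exact (QuotientGroup.eq_one_iff t).mpr hh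
      exact Subtype.ext this
    have hcomm_t : ∀ x : G, x * t * x⁻¹ * t⁻¹ ∈ Z := by
      intro x
      rw [hZdef, ← QuotientGroup.eq_one_iff]
      simp only [QuotientGroup.mk_mul, QuotientGroup.mk_inv, ht]
      have hcomm := Subgroup.mem_center_iff.mp tq.2 (x : G ⧸ Z)
      change (x : G ⧸ Z) * (t : G ⧸ Z) * (x : G ⧸ Z)⁻¹ * (t : G ⧸ Z)⁻¹ = 1
      rw [ht, hcomm]
      group
    -- the homomorphism g ↦ [g, t] into the center
    set f : G →* Z :=
      { toFun := fun x => ⟨x * t * x⁻¹ * t⁻¹, hcomm_t x⟩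
        map_one' := by ext; simp
        map_mul' := by
          intro x y
          have hβ := hcomm_t y
          rw [Subgroup.mem_center_iff] at hβ
          ext
          show x * y * t * (x * y)⁻¹ * t⁻¹ = (x * t * x⁻¹ * t⁻¹) * (y * t * y⁻¹ * t⁻¹)
          have h1 : y * t * y⁻¹ = (y * t * y⁻¹ * t⁻¹) * t := by group
          calc x * y * t * (x * y)⁻¹ * t⁻¹ = x * (y * t * y⁻¹) * x⁻¹ * t⁻¹ := by group
            _ = x * ((y * t * y⁻¹ * t⁻¹) * t) * x⁻¹ * t⁻¹ := by rw [← h1]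
            _ = (x * (y * t * y⁻¹ * t⁻¹)) * t * x⁻¹ * t⁻¹ := by group
            _ = ((y * t * y⁻¹ * t⁻¹) * x) * t * x⁻¹ * t⁻¹ := by rw [hβ x]
            _ = (y * t * y⁻¹ * t⁻¹) * (x * t * x⁻¹ * t⁻¹) := by group
            _ = (x * t * x⁻¹ * t⁻¹) * (y * t * y⁻¹ * t⁻¹) := (hβ _).symm } with hfdef
    have hfval : ∀ x : G, ((f x : G)) = x * t * x⁻¹ * t⁻¹ := fun _ => rfl
    set K := f.ker with hKdef
    have htK : t ∈ K := by
      rw [MonoidHom.mem_ker]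
      ext
      rw [hfval, OneMemClass.coe_one]
      group
    have hZK : Z ≤ K := by
      intro z hz
      rw [MonoidHom.mem_ker]
      ext
      rw [hfval, OneMemClass.coe_one]
      have := Subgroup.mem_center_iff.mp hz t
      rw [← this]
      group
    have hKcomm : ∀ x ∈ K, x * t = t * x := by
      intro x hx
      rw [MonoidHom.mem_ker] at hx
      have hx' : x * t * x⁻¹ * t⁻¹ = 1 := by rw [← hfval x, hx]; rfl
      have : x * t * x⁻¹ * t⁻¹ * (t * x) = 1 * (t * x) := by rw [hx']
      calc x * t = x * t * x⁻¹ * t⁻¹ * (t * x) := by group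
        _ = 1 * (t * x) := this
        _ = t * x := one_mul _
    have hKne : K ≠ ⊤ := by
      intro hh
      apply htZ
      rw [hZdef]
      exact Subgroup.mem_center_iff.mpr fun g => hKcomm g (hh ▸ Subgroup.mem_top g)
    -- cardinality bookkeeping
    obtain ⟨z, hzk, hcZ⟩ := (Nat.dvd_prime_pow hp).mp
      (hcard ▸ Subgroup.card_subgroup_dvd_card Z)
    have hppow_inj : ∀ {a b : ℕ}, p ^ a = p ^ b → a = b :=
      fun hab => Nat.pow_right_injective hp.two_le hab
    have hz1 : 1 ≤ z := by
      rcases Nat.eq_zero_or_pos z with h0 | h1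
      · exfalso
        have : 1 < Nat.card Z := Finite.one_lt_card
        rw [hcZ, h0, pow_zero] at this
        omega
      · exact h1
    -- index of the center
    obtain ⟨i, hik, hiZ⟩ := (Nat.dvd_prime_pow hp).mp
      (hcard ▸ Dvd.intro_left (Nat.card Z) (Subgroup.card_mul_index Z))
    have hzi : z + i = k := by
      apply hppow_inj
      rw [pow_add, ← hcZ, ← hiZ, Subgroup.card_mul_index, hcard]
    have hi0 : i ≠ 0 := by
      intro h0
      apply hZ
      apply Subgroup.index_eq_one.mp
      rw [hiZ, h0, pow_zero]
    have hi1 : i ≠ 1 := by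
      intro h1
      have hcQ : Nat.card (G ⧸ Z) = p := by
        rw [← Subgroup.index_eq_card, hiZ, h1, pow_one]
      haveI : IsCyclic (G ⧸ Z) := isCyclic_of_prime_card hcQ
      have hcomm := commutative_of_cyclic_center_quotient (QuotientGroup.mk' Z)
        (by rw [QuotientGroup.ker_mk'])
      exact hZ ((Subgroup.eq_top_iff' _).mpr fun g =>
        Subgroup.mem_center_iff.mpr fun y => hcomm y g)
    -- index of K
    have hKrange : K.index ∣ p ^ z := by
      rw [hKdef, Subgroup.index_ker, ← hcZ]
      exact Subgroup.card_subgroup_dvd_card f.range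
    obtain ⟨i', hi'z, hKi⟩ := (Nat.dvd_prime_pow hp).mp hKrange
    have hi'0 : i' ≠ 0 := by
      intro h0
      apply hKne
      apply Subgroup.index_eq_one.mp
      rw [hKi, h0, pow_zero]
    obtain ⟨mK, hmKk, hcK⟩ := (Nat.dvd_prime_pow hp).mp
      (hcard ▸ Subgroup.card_subgroup_dvd_card K)
    have hmKi' : mK + i' = k := by
      apply hppow_inj
      rw [pow_add, ← hcK, ← hKi, Subgroup.card_mul_index, hcard]
    -- the subgroup generated by t and the center inside K
    set M := Subgroup.zpowers t ⊔ Z with hMdef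
    have hMK : M ≤ K := sup_le (Subgroup.zpowers_le.mpr htK) hZK
    obtain ⟨wM, hwMk, hcM⟩ := (Nat.dvd_prime_pow hp).mp
      (hcard ▸ Subgroup.card_subgroup_dvd_card M)
    have hzwM : z < wM := by
      have hdvd : Nat.card Z ∣ Nat.card M := Subgroup.card_dvd_of_le le_sup_right
      have hne : Nat.card Z ≠ Nat.card M := by
        intro heq
        have : Z = M := Subgroup.eq_of_le_of_card_ge le_sup_right (le_of_eq heq.symm)
        exact htZ (this ▸ Subgroup.mem_sup_left (Subgroup.mem_zpowers t))
      rw [hcZ, hcM] at hdvd hne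
      have hle : z ≤ wM := (Nat.pow_dvd_pow_iff_le_right hp.one_lt).mp hdvd
      exact lt_of_le_of_ne hle (fun hh => hne (by rw [hh]))
    have hwMmK : wM ≤ mK := by
      have hdvd : Nat.card M ∣ Nat.card K := Subgroup.card_dvd_of_le hMK
      rw [hcM, hcK] at hdvd
      exact (Nat.pow_dvd_pow_iff_le_right hp.one_lt).mp hdvd
    have hi'1 : i' = 1 := by omega
    have hKindex : K.index = p := by rw [hKi, hi'1, pow_one]
    -- K is abelian
    have hMcent : M ≤ Subgroup.centralizer (K : Set G) := by
      rw [hMdef]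
      apply sup_le
      · exact Subgroup.zpowers_le.mpr
          (Subgroup.mem_centralizer_iff.mpr fun y hy => hKcomm y hy)
      · intro ζ hζ
        exact Subgroup.mem_centralizer_iff.mpr fun y _ => Subgroup.mem_center_iff.mp hζ y
    have hM'le : M.subgroupOf K ≤ Subgroup.center ↥K := by
      intro x hx
      rw [Subgroup.mem_subgroupOf] at hx
      refine Subgroup.mem_center_iff.mpr fun y => ?_
      exact Subtype.ext (Subgroup.mem_centralizer_iff.mp (hMcent hx) (y : G) y.2)
    have hcM' : Nat.card (M.subgroupOf K) = p ^ wM := by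
      rw [← hcM]
      exact Nat.card_congr (Subgroup.subgroupOfEquivOfLe hMK).toEquiv
    obtain ⟨cc, hcck, hccZ⟩ := (Nat.dvd_prime_pow hp).mp
      (by
        have h1 : Nat.card (Subgroup.center ↥K) ∣ Nat.card ↥K :=
          Subgroup.card_subgroup_dvd_card _
        rw [hcK] at h1
        exact h1.trans (pow_dvd_pow p hmKk) : Nat.card (Subgroup.center ↥K) ∣ p ^ k)
    have hwMcc : wM ≤ cc := by
      have h1 : Nat.card (M.subgroupOf K) ≤ Nat.card (Subgroup.center ↥K) :=
        Subgroup.card_le_of_le hM'le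
      rw [hcM', hccZ] at h1
      exact (Nat.pow_le_pow_iff_right hp.one_lt).mp h1
    obtain ⟨e, hek, hei⟩ := (Nat.dvd_prime_pow hp).mp
      (by
        have := Subgroup.card_mul_index (Subgroup.center ↥K)
        have h2 : (Subgroup.center ↥K).index ∣ p ^ mK :=
          hcK ▸ Dvd.intro_left _ this
        exact h2.trans (pow_dvd_pow p hmKk) : (Subgroup.center ↥K).index ∣ p ^ k)
    have hcce : cc + e = mK := by
      apply hppow_inj
      rw [pow_add, ← hccZ, ← hei, Subgroup.card_mul_index, hcK]
    have he1 : e ≤ 1 := by omega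
    haveI : IsCyclic (↥K ⧸ Subgroup.center ↥K) := by
      rcases Nat.lt_or_ge e 1 with h0 | h1
      · have he0 : e = 0 := by omega
        have : Nat.card (↥K ⧸ Subgroup.center ↥K) = 1 := by
          rw [← Subgroup.index_eq_card, hei, he0, pow_zero]
        haveI : Subsingleton (↥K ⧸ Subgroup.center ↥K) :=
          (Nat.card_eq_one_iff_unique.mp this).1
        infer_instance
      · have he1' : e = 1 := by omega
        exact isCyclic_of_prime_card (by rw [← Subgroup.index_eq_card, hei, he1', pow_one])
    have hKab : ∀ a b : ↥K, a * b = b * a :=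
      commutative_of_cyclic_center_quotient (QuotientGroup.mk' (Subgroup.center ↥K))
        (by rw [QuotientGroup.ker_mk'])
    have hKcommG : ∀ a ∈ K, ∀ b ∈ K, a * b = b * a := by
      intro a ha b hb
      exact Subtype.ext_iff.mp (hKab ⟨a, ha⟩ ⟨b, hb⟩)
    exact abelian_index_p_rigid hp hpg K hKcommG hKindex φ h
end

section
/- Let G be a finite group which is an internal central product of subgroups H and K, i.e., every element of H commutes with every element of K and H and K together generate G. If every locally inner automorphism of H is inner and every locally inner automorphism of K is inner, then every locally inner automorphism of G is inner. (Central products of A-rigid groups are A-rigid.) -/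
/-- Central products of A-rigid finite groups are A-rigid: if a finite group `G` is the
internal central product of subgroups `H` and `K` (elements of `H` and `K` commute and
together they generate `G`), and every locally inner automorphism of `H` (resp. `K`) is
inner, then every locally inner automorphism of `G` is inner. -/
theorem central_product_A_rigid {G : Type*} [Group G] [Finite G]
    (H K : Subgroup G)
    (hcomm : ∀ h ∈ H, ∀ k ∈ K, h * k = k * h)
    (hgen : H ⊔ K = ⊤)
    (hH : ∀ ψ : H ≃* H, (∀ x : H, IsConj (ψ x) x) → ∃ a : H, ∀ x : H, ψ x = a * x * a⁻¹)
    (hK : ∀ ψ : K ≃* K, (∀ x : K, IsConj (ψ x) x) → ∃ a : K, ∀ x : K, ψ x = a * x * a⁻¹)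
    (φ : G ≃* G) (h : ∀ x : G, IsConj (φ x) x) :
    ∃ a : G, ∀ x : G, φ x = a * x * a⁻¹ := by
  -- every element of G factors as h * k
  have key : ∀ g : G, ∃ h ∈ H, ∃ k ∈ K, g = h * k := by
    let S : Subgroup G :=
      { carrier := {g | ∃ h ∈ H, ∃ k ∈ K, g = h * k}
        one_mem' := ⟨1, H.one_mem, 1, K.one_mem, by simp⟩
        mul_mem' := by
          rintro a b ⟨h1, hh1, k1, hk1, rfl⟩ ⟨h2, hh2, k2, hk2, rfl⟩
          refine ⟨h1 * h2, H.mul_mem hh1 hh2, k1 * k2, K.mul_mem hk1 hk2, ?_⟩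
          have := hcomm h2 hh2 k1 hk1
          calc h1 * k1 * (h2 * k2) = h1 * (k1 * h2) * k2 := by group
            _ = h1 * (h2 * k1) * k2 := by rw [← this]
            _ = h1 * h2 * (k1 * k2) := by group
        inv_mem' := by
          intro g hg
          obtain ⟨h1, hh1, k1, hk1, rfl⟩ := hg
          refine ⟨h1⁻¹, H.inv_mem hh1, k1⁻¹, K.inv_mem hk1, ?_⟩
          rw [mul_inv_rev, ← hcomm h1⁻¹ (H.inv_mem hh1) k1⁻¹ (K.inv_mem hk1)] }
    have hle : H ⊔ K ≤ S := by
      refine sup_le (fun x hx => ⟨x, hx, 1, K.one_mem, by simp⟩)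
        (fun x hx => ⟨1, H.one_mem, x, hx, by simp⟩)
    intro g
    exact hle (hgen ▸ Subgroup.mem_top g)
  -- φ maps H into H, by a conjugation inside H, and similarly for K
  have hconjH : ∀ x ∈ H, ∃ c ∈ H, φ x = c * x * c⁻¹ := by
    intro x hx
    obtain ⟨c, hc⟩ := isConj_iff.mp (h x).symm
    obtain ⟨h1, hh1, k1, hk1, rfl⟩ := key c
    refine ⟨h1, hh1, ?_⟩
    have hxk : x * k1 = k1 * x := hcomm x hx k1 hk1
    calc φ x = h1 * k1 * x * (h1 * k1)⁻¹ := hc.symm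
      _ = h1 * (k1 * x * k1⁻¹) * h1⁻¹ := by group
      _ = h1 * x * h1⁻¹ := by rw [← hxk]; group
  have hconjK : ∀ x ∈ K, ∃ c ∈ K, φ x = c * x * c⁻¹ := by
    intro x hx
    obtain ⟨c, hc⟩ := isConj_iff.mp (h x).symm
    obtain ⟨h1, hh1, k1, hk1, rfl⟩ := key c
    refine ⟨k1, hk1, ?_⟩
    have hxk : h1 * x = x * h1 := hcomm h1 hh1 x hx
    calc φ x = h1 * k1 * x * (h1 * k1)⁻¹ := hc.symm
      _ = h1 * (k1 * x * k1⁻¹) * h1⁻¹ := by group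
      _ = k1 * x * k1⁻¹ := by
          have : k1 * x * k1⁻¹ ∈ K := K.mul_mem (K.mul_mem hk1 hx) (K.inv_mem hk1)
          have h2 := hcomm h1 hh1 _ this
          rw [mul_assoc h1, ← mul_assoc h1, h2]; group
  -- restricted maps
  have mapsH : ∀ x : H, φ x ∈ H := fun x => by
    obtain ⟨c, hc, he⟩ := hconjH x x.2
    rw [he]; exact H.mul_mem (H.mul_mem hc x.2) (H.inv_mem hc)
  have mapsK : ∀ x : K, φ x ∈ K := fun x => by
    obtain ⟨c, hc, he⟩ := hconjK x x.2
    rw [he]; exact K.mul_mem (K.mul_mem hc x.2) (K.inv_mem hc)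
  let fH : H →* H :=
    { toFun := fun x => ⟨φ x, mapsH x⟩
      map_one' := by ext; simp
      map_mul' := fun x y => by ext; simp }
  let fK : K →* K :=
    { toFun := fun x => ⟨φ x, mapsK x⟩
      map_one' := by ext; simp
      map_mul' := fun x y => by ext; simp }
  have injH : Function.Injective fH := fun x y hxy => by
    apply Subtype.ext; exact φ.injective (congrArg Subtype.val hxy)
  have injK : Function.Injective fK := fun x y hxy => by
    apply Subtype.ext; exact φ.injective (congrArg Subtype.val hxy)
  let ψH : H ≃* H := MulEquiv.ofBijective fH (Finite.injective_iff_bijective.mp injH)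
  let ψK : K ≃* K := MulEquiv.ofBijective fK (Finite.injective_iff_bijective.mp injK)
  have ψHcp : ∀ x : H, IsConj (ψH x) x := by
    intro x
    obtain ⟨c, hc, he⟩ := hconjH x x.2
    refine isConj_iff.mpr ⟨⟨c, hc⟩⁻¹, ?_⟩
    apply Subtype.ext
    show (c:G)⁻¹ * (φ x) * c⁻¹⁻¹ = x
    rw [he]; group
  have ψKcp : ∀ x : K, IsConj (ψK x) x := by
    intro x
    obtain ⟨c, hc, he⟩ := hconjK x x.2
    refine isConj_iff.mpr ⟨⟨c, hc⟩⁻¹, ?_⟩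
    apply Subtype.ext
    show (c:G)⁻¹ * (φ x) * c⁻¹⁻¹ = x
    rw [he]; group
  obtain ⟨a, ha⟩ := hH ψH ψHcp
  obtain ⟨b, hb⟩ := hK ψK ψKcp
  refine ⟨(a : G) * (b : G), ?_⟩
  intro x
  obtain ⟨h1, hh1, k1, hk1, rfl⟩ := key x
  have e1 : φ h1 = (a : G) * h1 * (a : G)⁻¹ := congrArg Subtype.val (ha ⟨h1, hh1⟩)
  have e2 : φ k1 = (b : G) * k1 * (b : G)⁻¹ := congrArg Subtype.val (hb ⟨k1, hk1⟩)
  have cab : (a : G) * b = b * a := hcomm a a.2 b b.2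
  have cak : (a : G) * k1 = k1 * a := hcomm a a.2 k1 hk1
  have cbh : (h1 : G) * b = b * h1 := hcomm h1 hh1 b b.2
  have cab' : (a : G)⁻¹ * b = b * (a:G)⁻¹ := by
    have := hcomm (a:G)⁻¹ (H.inv_mem a.2) b b.2; exact this
  have cak' : (a : G)⁻¹ * k1 = k1 * (a:G)⁻¹ := by
    have := hcomm (a:G)⁻¹ (H.inv_mem a.2) k1 hk1; exact this
  have cab'' : (a : G)⁻¹ * (b:G)⁻¹ = (b:G)⁻¹ * (a:G)⁻¹ := by
    have := hcomm (a:G)⁻¹ (H.inv_mem a.2) (b:G)⁻¹ (K.inv_mem b.2); exact this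
  rw [map_mul, e1, e2]
  calc (a:G) * h1 * (a:G)⁻¹ * ((b:G) * k1 * (b:G)⁻¹)
      = (a:G) * h1 * ((a:G)⁻¹ * b) * k1 * (b:G)⁻¹ := by group
    _ = (a:G) * h1 * ((b:G) * (a:G)⁻¹) * k1 * (b:G)⁻¹ := by rw [cab']
    _ = (a:G) * (h1 * b) * ((a:G)⁻¹ * k1) * (b:G)⁻¹ := by group
    _ = (a:G) * ((b:G) * h1) * (k1 * (a:G)⁻¹) * (b:G)⁻¹ := by rw [← cbh, ← cak']
    _ = (a:G) * (b:G) * (h1 * k1) * ((a:G)⁻¹ * (b:G)⁻¹) := by group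
    _ = (a:G) * (b:G) * (h1 * k1) * ((b:G)⁻¹ * (a:G)⁻¹) := by rw [cab'']
    _ = (a:G) * (b:G) * (h1 * k1) * ((a:G) * (b:G))⁻¹ := by group
end

section
/- Let G be a finite nilpotent group of nilpotency class c ≥ 1. Then the quotient group Sha(G) = Aut_c(G)/Inn(G) of locally inner automorphisms modulo inner automorphisms is nilpotent of nilpotency class at most c − 1. -/
/-- The class-preserving (locally inner) automorphisms of a group `G` form a subgroup
of `MulAut G`. -/
def classPreservingAut (G : Type*) [Group G] : Subgroup (MulAut G) where
  carrier := {φ : MulAut G | ∀ x : G, IsConj (φ x) x}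
  one_mem' := fun x => IsConj.refl x
  mul_mem' := fun {a b} ha hb x => (ha (b x)).trans (hb x)
  inv_mem' := fun {a} ha x => by
    have := (ha (a⁻¹ x)).symm
    simpa using this

/-- The inner automorphisms, viewed as a subgroup of the group of class-preserving
automorphisms. -/
def innInClassPreserving (G : Type*) [Group G] : Subgroup (classPreservingAut G) :=
  (MulAut.conj (G := G)).range.subgroupOf (classPreservingAut G)

instance (G : Type*) [Group G] : (MulAut.conj (G := G)).range.Normal := by
  constructor
  intro m hm g
  obtain ⟨a, rfl⟩ := hm
  refine ⟨g a, ?_⟩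
  ext x
  simp [MulAut.conj, mul_assoc]

instance (G : Type*) [Group G] : (innInClassPreserving G).Normal :=
  Subgroup.Normal.subgroupOf inferInstance _

section SahAux

variable {G : Type*} [Group G]

open Subgroup
open scoped commutatorElement

instance lowerCentralSeries_characteristic' (n : ℕ) :
    (Subgroup.lowerCentralSeries (⊤ : Subgroup G) n).Characteristic := by
  induction n with
  | zero => exact Subgroup.topCharacteristic
  | succ d hd =>
      show Characteristic ⁅Subgroup.lowerCentralSeries (⊤ : Subgroup G) d, (⊤ : Subgroup G)⁆
      exact Subgroup.commutator_characteristic _ _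

theorem aut_mem_lcs (e : MulAut G) {n : ℕ} {u : G} (h : u ∈ Subgroup.lowerCentralSeries (⊤ : Subgroup G) n) :
    e u ∈ Subgroup.lowerCentralSeries (⊤ : Subgroup G) n := by
  have hfix := Subgroup.characteristic_iff_comap_eq.mp
    (inferInstance : (Subgroup.lowerCentralSeries (⊤ : Subgroup G) n).Characteristic) (e : G ≃* G)
  have : u ∈ (Subgroup.lowerCentralSeries (⊤ : Subgroup G) n).comap (e : G ≃* G).toMonoidHom := by
    rw [hfix]; exact h
  exact Subgroup.mem_comap.mp this

theorem top_comm_le_lcs (i : ℕ) :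
    ⁅(⊤ : Subgroup G), Subgroup.lowerCentralSeries (⊤ : Subgroup G) i⁆ ≤ Subgroup.lowerCentralSeries (⊤ : Subgroup G) (i + 1) :=
  (Subgroup.commutator_comm _ _).le

/-- The key "stability" subgroups of the class-preserving automorphism group. -/
def sahS (G : Type*) [Group G] (k : ℕ) : Subgroup (classPreservingAut G) where
  carrier := {φ | ∀ (i : ℕ) (u : G), u ∈ Subgroup.lowerCentralSeries (⊤ : Subgroup G) i →
      (φ : MulAut G) u * u⁻¹ ∈ Subgroup.lowerCentralSeries (⊤ : Subgroup G) (i + k + 1)}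
  one_mem' := by
    intro i u hu
    simpa using Subgroup.one_mem _
  mul_mem' := by
    rintro a b ha hb i u hu
    have key : ((a * b : classPreservingAut G) : MulAut G) u * u⁻¹
        = (a : MulAut G) ((b : MulAut G) u * u⁻¹) * ((a : MulAut G) u * u⁻¹) := by
      simp only [Subgroup.coe_mul, MulAut.mul_apply, map_mul, map_inv]
      group
    rw [key]
    exact mul_mem (aut_mem_lcs _ (hb i u hu)) (ha i u hu)
  inv_mem' := by
    rintro a ha i u hu
    have hu' : ((a : MulAut G)⁻¹) u ∈ Subgroup.lowerCentralSeries (⊤ : Subgroup G) i := aut_mem_lcs _ hu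
    have h2 := ha i _ hu'
    rw [MulAut.apply_inv_self] at h2
    have h3 := inv_mem h2
    simpa using h3

theorem mem_sahS_zero (φ : classPreservingAut G) : φ ∈ sahS G 0 := by
  intro i u hu
  obtain ⟨c, hcj⟩ := isConj_iff.mp (φ.2 u)
  have : (φ : MulAut G) u * u⁻¹ = ⁅c⁻¹, u⁆ := by
    have h1 : (φ : MulAut G) u = c⁻¹ * u * c := by
      calc (φ : MulAut G) u = c⁻¹ * (c * (φ : MulAut G) u * c⁻¹) * c := by group
        _ = c⁻¹ * u * c := by rw [hcj]
    rw [h1, commutatorElement_def]; group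
  rw [this]
  exact top_comm_le_lcs i
    (Subgroup.commutator_mem_commutator (Subgroup.mem_top c⁻¹) hu)

theorem lcs_le_sahS : ∀ k : ℕ, Subgroup.lowerCentralSeries (⊤ : Subgroup (classPreservingAut G)) k ≤ sahS G k
  | 0 => fun φ _ => mem_sahS_zero φ
  | (k + 1) => by
    show ⁅Subgroup.lowerCentralSeries (⊤ : Subgroup (classPreservingAut G)) k, (⊤ : Subgroup (classPreservingAut G))⁆
        ≤ sahS G (k + 1)
    rw [Subgroup.commutator_le]
    intro ψ hψ φ _
    have hψS := lcs_le_sahS k hψ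
    have hφS := mem_sahS_zero φ
    intro i u hu
    set Ψ : MulAut G := (ψ : MulAut G) with hΨ
    set Φ : MulAut G := (φ : MulAut G) with hΦ
    set x : G := Ψ⁻¹ (Φ⁻¹ u) with hx
    have hxm : x ∈ Subgroup.lowerCentralSeries (⊤ : Subgroup G) i := aut_mem_lcs _ (aut_mem_lcs _ hu)
    set a : G := Φ x * x⁻¹ with ha
    set b : G := Ψ x * x⁻¹ with hb
    have ham : a ∈ Subgroup.lowerCentralSeries (⊤ : Subgroup G) (i + 1) := by
      simpa using hφS i x hxm
    have hbm : b ∈ Subgroup.lowerCentralSeries (⊤ : Subgroup G) (i + k + 1) := hψS i x hxm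
    have hnm : Ψ a * a⁻¹ ∈ Subgroup.lowerCentralSeries (⊤ : Subgroup G) (i + (k + 1) + 1) := by
      have := hψS (i + 1) a ham
      have he : i + 1 + k + 1 = i + (k + 1) + 1 := by omega
      rwa [he] at this
    have hcm : ⁅a, b⁆ ∈ Subgroup.lowerCentralSeries (⊤ : Subgroup G) (i + (k + 1) + 1) := by
      have : ⁅a, b⁆ ∈ ⁅(⊤ : Subgroup G), Subgroup.lowerCentralSeries (⊤ : Subgroup G) (i + k + 1)⁆ :=
        Subgroup.commutator_mem_commutator (Subgroup.mem_top a) hbm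
      have := top_comm_le_lcs (i + k + 1) this
      have he : i + k + 1 + 1 = i + (k + 1) + 1 := by omega
      rwa [he] at this
    have hwm : Φ b * b⁻¹ ∈ Subgroup.lowerCentralSeries (⊤ : Subgroup G) (i + (k + 1) + 1) := by
      have := hφS (i + k + 1) b hbm
      have he : i + k + 1 + 0 + 1 = i + (k + 1) + 1 := by omega
      rwa [he] at this
    have key : ((⁅ψ, φ⁆ : classPreservingAut G) : MulAut G) u * u⁻¹
        = (Ψ a * a⁻¹) * ⁅a, b⁆ * (Φ b * b⁻¹)⁻¹ := by
      have hcoe : ((⁅ψ, φ⁆ : classPreservingAut G) : MulAut G) = Ψ * Φ * Ψ⁻¹ * Φ⁻¹ := by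
        rw [commutatorElement_def]; rfl
      have hu' : u = Φ (Ψ x) := by
        rw [hx, MulAut.apply_inv_self, MulAut.apply_inv_self]
      rw [hcoe, hu']
      simp only [ha, hb, MulAut.mul_apply, MulAut.inv_apply_self, map_mul, map_inv,
        commutatorElement_def]
      group
    rw [key]
    exact mul_mem (mul_mem hnm hcm) (inv_mem hwm)

end SahAux

/-- If `G` is a finite nilpotent group of nilpotency class `c ≥ 1`, then
`Sha(G) = Aut_c(G)/Inn(G)` is nilpotent of class at most `c - 1` (Sah). -/
theorem sha_of_nilpotent_group_nilpotent (G : Type*) [Group G] [Finite G]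
    [Group.IsNilpotent G] (c : ℕ) (hc : 1 ≤ c) (hclass : Group.nilpotencyClass G = c) :
    ∃ _ : Group.IsNilpotent (classPreservingAut G ⧸ innInClassPreserving G),
      Group.nilpotencyClass (classPreservingAut G ⧸ innInClassPreserving G) ≤ c - 1 := by
  have hGc : Subgroup.lowerCentralSeries (⊤ : Subgroup G) c = ⊥ := by
    rw [← hclass]; exact lowerCentralSeries_nilpotencyClass
  have hbot : Subgroup.lowerCentralSeries (⊤ : Subgroup (classPreservingAut G)) (c - 1) = ⊥ := by
    rw [eq_bot_iff]
    intro θ hθ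
    have hS := lcs_le_sahS (c - 1) hθ
    have hid : ∀ u : G, (θ : MulAut G) u = u := by
      intro u
      have := hS 0 u (by simp [lowerCentralSeries_zero])
      have he : 0 + (c - 1) + 1 = c := by omega
      rw [he, hGc, Subgroup.mem_bot] at this
      have := mul_inv_eq_one.mp this
      exact this
    have : θ = 1 := by
      ext1
      exact MulEquiv.ext hid
    rw [this]
    exact Subgroup.one_mem _
  haveI hnil : Group.IsNilpotent (classPreservingAut G) :=
    nilpotent_iff_lowerCentralSeries.mpr ⟨c - 1, hbot⟩
  have hcl : Group.nilpotencyClass (classPreservingAut G) ≤ c - 1 :=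
    lowerCentralSeries_eq_bot_iff_nilpotencyClass_le.mp hbot
  refine ⟨inferInstance, le_trans ?_ hcl⟩
  exact nilpotencyClass_quotient_le _
end

section
/- There exists a group G of order 32 admitting a locally inner automorphism that is not inner: an automorphism φ of G such that φ(x) is conjugate to x for every x ∈ G, yet there is no a ∈ G with φ(x) = a x a⁻¹ for all x ∈ G. (In other words, there is a non-Sha-rigid group of order 32.) -/
/- Wall's example: `G = C₈ ⋊ (C₂ × C₂)`, where the two involutions act on `C₈ = ⟨a⟩`
by `a ↦ a³` and `a ↦ a⁵`.  The map `(i, s, t) ↦ (i + 4t, s, t)` is a class-preserving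
automorphism that is not inner. -/

def WG : Type := Fin 8 × Fin 2 × Fin 2

instance : DecidableEq WG := inferInstanceAs (DecidableEq (Fin 8 × Fin 2 × Fin 2))
instance : Fintype WG := inferInstanceAs (Fintype (Fin 8 × Fin 2 × Fin 2))

/-- The action multiplier: `3^s * 5^t mod 8`. -/
def wm (s t : Fin 2) : Fin 8 := if s = 1 then (if t = 1 then 7 else 3) else (if t = 1 then 5 else 1)

lemma wm_mul : ∀ s t u v : Fin 2, wm (s + u) (t + v) = wm s t * wm u v := by decide

def wmul (x y : WG) : WG := (x.1 + wm x.2.1 x.2.2 * y.1, x.2.1 + y.2.1, x.2.2 + y.2.2)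

def wone : WG := ((0 : Fin 8), (0 : Fin 2), (0 : Fin 2))

def winv (x : WG) : WG := (-(wm x.2.1 x.2.2 * x.1), x.2.1, x.2.2)

open Fin.CommRing in
instance : Group WG where
  mul := wmul
  one := wone
  inv := winv
  mul_assoc x y z := by
    obtain ⟨a, s, t⟩ := x; obtain ⟨b, u, v⟩ := y; obtain ⟨c, w, r⟩ := z
    show wmul (wmul _ _) _ = wmul _ (wmul _ _)
    unfold wmul
    simp only [wm_mul]
    refine congrArg₂ Prod.mk ?_ (congrArg₂ Prod.mk ?_ ?_) <;> ring
  one_mul x := by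
    obtain ⟨a, s, t⟩ := x
    show wmul wone _ = _
    unfold wmul wone
    simp [wm]
    rfl
  mul_one x := by
    obtain ⟨a, s, t⟩ := x
    show wmul _ wone = _
    unfold wmul wone
    have : ∀ s t : Fin 2, wm s t * 0 = 0 := by decide
    simp [this]
    rfl
  inv_mul_cancel x := by
    obtain ⟨a, s, t⟩ := x
    show wmul (winv _) _ = wone
    unfold wmul winv wone
    have h2 : ∀ s : Fin 2, s + s = 0 := by decide
    simp [h2]
    rfl

/-- The class-preserving, non-inner automorphism `(i, s, t) ↦ (i + 4t, s, t)`. -/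
def wphi : WG ≃* WG where
  toFun x := (x.1 + (if x.2.2 = 1 then 4 else 0), x.2.1, x.2.2)
  invFun x := (x.1 + (if x.2.2 = 1 then 4 else 0), x.2.1, x.2.2)
  left_inv := by unfold Function.LeftInverse; delta WG; decide
  right_inv := by unfold Function.RightInverse Function.LeftInverse; delta WG; decide
  map_mul' := by delta WG; decide

/-- A witness conjugating `x` to `wphi x`. -/
def wwit (x : WG) : WG := ((if x.2.2 = 1 then (if x.2.1 = 1 then 2 else 1) else 0 : Fin 8), 0, 0)

lemma wphi_conj : ∀ x : WG, wphi x = wwit x * x * (wwit x)⁻¹ := by decide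

lemma wphi_not_inner : ¬ ∃ a : WG, ∀ x : WG, wphi x = a * x * a⁻¹ := by decide

lemma wg_card : Nat.card WG = 32 := by
  rw [Nat.card_eq_fintype_card]
  rfl

/-- There exists a group of order 32 with a locally inner (class-preserving) automorphism
that is not inner (Wall). -/
theorem exists_group_order_32_not_sha_rigid :
    ∃ G : GrpCat, Nat.card G = 32 ∧
      ∃ φ : G ≃* G, (∀ x : G, IsConj (φ x) x) ∧
        ¬ ∃ a : G, ∀ x : G, φ x = a * x * a⁻¹ := by
  refine ⟨GrpCat.of (ULift WG), ?_, ?_⟩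
  · show Nat.card (ULift WG) = 32
    rw [Nat.card_ulift, wg_card]
  · refine ⟨MulEquiv.ulift.trans (wphi.trans MulEquiv.ulift.symm), ?_, ?_⟩
    · intro x
      have h : IsConj (wphi (MulEquiv.ulift x)) (MulEquiv.ulift x) := by
        rw [wphi_conj]
        exact (isConj_iff.mpr ⟨wwit _, rfl⟩).symm
      have := (MulEquiv.ulift.symm.toMonoidHom : WG →* ULift WG).map_isConj h
      exact this
    · rintro ⟨a, ha⟩
      apply wphi_not_inner
      refine ⟨MulEquiv.ulift a, fun y => ?_⟩
      have := ha (MulEquiv.ulift.symm y)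
      have h2 := congrArg (MulEquiv.ulift (α := WG)) this
      simpa using h2
end
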